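/- Let α ∈ (1/2, 1] and let M ≥ 2 be an integer. Every f ∈ S_α has a graph that intersects at most 3(M+1) of the rectangles Q_{ik}, where i ranges over integers with 0 ≤ i ≤ M and k ranges over integers with −M^{1/2} − 1 ≤ k ≤ M^{1/2}. -/

import Mathlib

open MeasureTheory Set Real

noncomputable section

/-- The class `S_α` of functions bounded by 1 on `[0,1]` with `α`-Hölder constant at most 1. -/
def holderClass (α : ℝ) : Set (ℝ → ℝ) :=
  {f | (∀ t ∈ Icc (0:ℝ) 1, |f t| ≤ 1) ∧
       ∀ s ∈ Icc (0:ℝ) 1, ∀ t ∈ Icc (0:ℝ) 1, |f s - f t| ≤ |s - t| ^ α}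

/-- The rectangle `R_{ℓ m} = [ℓ/N, (ℓ+1)/N] × [m/N^α, (m+1)/N^α]`. -/
def Rrect (α : ℝ) (N : ℕ) (ℓ m : ℤ) : Set (ℝ × ℝ) :=
  Icc ((ℓ:ℝ)/N) (((ℓ:ℝ)+1)/N) ×ˢ Icc ((m:ℝ)/(N:ℝ)^α) (((m:ℝ)+1)/(N:ℝ)^α)

/-- The rectangle `Q_{i k} = [i/M, (i+1)/M] × [k/M^{1/2}, (k+1)/M^{1/2}]`. -/
def Qrect (M : ℕ) (i k : ℤ) : Set (ℝ × ℝ) :=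
  Icc ((i:ℝ)/M) (((i:ℝ)+1)/M) ×ˢ Icc ((k:ℝ)/Real.sqrt M) (((k:ℝ)+1)/Real.sqrt M)

/-- `W` is a standard one-dimensional Brownian motion under `P`. -/
def IsBrownianMotion {Ω : Type*} [MeasurableSpace Ω] (P : Measure Ω) (W : ℝ → Ω → ℝ) : Prop :=
  (∀ ω, W 0 ω = 0) ∧
  (∀ ω, Continuous fun t => W t ω) ∧
  (∀ t : ℝ, Measurable (W t)) ∧
  (∀ s t : ℝ, 0 ≤ s → s ≤ t →
    Measure.map (fun ω => W t ω - W s ω) P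
      = ProbabilityTheory.gaussianReal 0 (Real.toNNReal (t - s))) ∧
  (∀ n : ℕ, ∀ t : ℕ → ℝ, Monotone t → (∀ i, 0 ≤ t i) →
    ProbabilityTheory.iIndepFun
      (fun (i : Fin n) (ω : Ω) => W (t (i + 1)) ω - W (t i) ω) P)

/-- `M = ⌊N^ε⌋`. -/
def Mpar (ε : ℝ) (N : ℕ) : ℕ := ⌊(N:ℝ) ^ ε⌋₊

/-- `J = ⌈N/M⌉`. -/
def Jpar (ε : ℝ) (N : ℕ) : ℕ := ⌈(N:ℝ) / (Mpar ε N)⌉₊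

/-- `A_{ik}(w)`: the number of `j ∈ {1, …, J}` such that `w` takes a value in
`[k/√M, (k+1)/√M]` at some time in `[i/M + (j-1)/N, i/M + j/N]`. -/
def crossCount (w : ℝ → ℝ) (N M J : ℕ) (i k : ℤ) : ℕ :=
  Set.ncard {j : ℕ | 1 ≤ j ∧ j ≤ J ∧
    ∃ t ∈ Icc ((i:ℝ)/M + ((j:ℝ)-1)/N) ((i:ℝ)/M + (j:ℝ)/N),
      (k:ℝ)/Real.sqrt M ≤ w t ∧ w t ≤ ((k:ℝ)+1)/Real.sqrt M}

/-- For `α ∈ (1/2,1]` and `M ≥ 2`, the graph of any `f ∈ S_α` meets at most `3(M+1)` of the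
rectangles `Q_{i k}` with `0 ≤ i ≤ M` and `-M^{1/2} - 1 ≤ k ≤ M^{1/2}`. -/
theorem holder_graph_meets_at_most_3M_plus_3_Qrects
    (α : ℝ) (hα : α ∈ Ioc (1/2 : ℝ) 1) (M : ℕ) (hM : 2 ≤ M)
    (f : ℝ → ℝ) (hf : f ∈ holderClass α) :
    Set.ncard {p : ℤ × ℤ |
        0 ≤ p.1 ∧ (p.1:ℝ) ≤ M ∧
        -Real.sqrt M - 1 ≤ (p.2:ℝ) ∧ (p.2:ℝ) ≤ Real.sqrt M ∧
        (Qrect M p.1 p.2 ∩ Set.graphOn f (Icc 0 1)).Nonempty} ≤ 3 * (M + 1) := by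
  obtain ⟨hfb, hfh⟩ := hf
  obtain ⟨hα1, hα2⟩ := hα
  have hα0 : (0:ℝ) ≤ α := by linarith
  have hMR : (2:ℝ) ≤ (M:ℝ) := by exact_mod_cast hM
  have hMpos : (0:ℝ) < (M:ℝ) := by linarith
  have hsq : (0:ℝ) < Real.sqrt M := Real.sqrt_pos.mpr hMpos
  set c : ℝ := (1/(2*(M:ℝ)))^α with hcdef
  have hc0 : 0 ≤ c := Real.rpow_nonneg (by positivity) α
  set δ : ℝ := c * Real.sqrt M with hδdef
  have hδ0 : 0 ≤ δ := mul_nonneg hc0 hsq.le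
  have hδ1 : δ < 1 := by
    have h1 : (0:ℝ) < 1/(2*(M:ℝ)) := by positivity
    have h2 : c ≤ (1/(2*(M:ℝ)))^((1:ℝ)/2) :=
      Real.rpow_le_rpow_of_exponent_ge h1
        (by rw [div_le_one (by linarith)]; linarith) hα1.le
    have h3 : (1/(2*(M:ℝ)))^((1:ℝ)/2) = Real.sqrt (1/(2*(M:ℝ))) :=
      (Real.sqrt_eq_rpow _).symm
    have h4 : Real.sqrt (1/(2*(M:ℝ))) * Real.sqrt M
        = Real.sqrt (1/(2*(M:ℝ)) * M) := (Real.sqrt_mul h1.le _).symm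
    have h5 : (1/(2*(M:ℝ)))*(M:ℝ) = 1/2 := by field_simp
    have h6 : Real.sqrt ((1:ℝ)/2) < 1 := by
      have := Real.sqrt_lt_sqrt (by norm_num : (0:ℝ) ≤ 1/2) (by norm_num : (1:ℝ)/2 < 1)
      rwa [Real.sqrt_one] at this
    calc δ = c * Real.sqrt M := hδdef
      _ ≤ Real.sqrt (1/(2*(M:ℝ))) * Real.sqrt M := by
          apply mul_le_mul_of_nonneg_right _ hsq.le
          rw [← h3]; exact h2
      _ = Real.sqrt ((1:ℝ)/2) := by rw [h4, h5]
      _ < 1 := h6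
  set a : ℤ → ℤ :=
    fun i => ⌈f (min ((2*(i:ℝ)+1)/(2*(M:ℝ))) 1) * Real.sqrt M - 1 - δ⌉ with hadef
  set φ : ℤ×ℤ → ℤ×ℤ := fun p => (p.1, p.2 - a p.1) with hφdef
  have hinj : Function.Injective φ := by
    intro p q h
    simp only [hφdef, Prod.mk.injEq] at h
    obtain ⟨h1, h2⟩ := h
    rw [h1] at h2
    exact Prod.ext h1 (by omega)
  set S : Set (ℤ × ℤ) := {p : ℤ × ℤ |
        0 ≤ p.1 ∧ (p.1:ℝ) ≤ M ∧
        -Real.sqrt M - 1 ≤ (p.2:ℝ) ∧ (p.2:ℝ) ≤ Real.sqrt M ∧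
        (Qrect M p.1 p.2 ∩ Set.graphOn f (Icc 0 1)).Nonempty} with hSdef
  set T : Finset (ℤ×ℤ) := Finset.Icc (0:ℤ) (M:ℤ) ×ˢ Finset.Icc (0:ℤ) 2 with hTdef
  have hsub : φ '' S ⊆ ↑T := by
    rintro q ⟨⟨i, k⟩, hp, rfl⟩
    obtain ⟨hi0, hiM, hk1, hk2, ⟨z, hzQ, hzG⟩⟩ := hp
    obtain ⟨x, hx01, rfl⟩ := hzG
    rw [Qrect, Set.mem_prod] at hzQ
    obtain ⟨hxQ, hyQ⟩ := hzQ
    obtain ⟨hx1, hx2⟩ := hxQ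
    obtain ⟨hy1, hy2⟩ := hyQ
    obtain ⟨hx0, hx1'⟩ := hx01
    have hi0' : (0:ℝ) ≤ (i:ℝ) := by exact_mod_cast hi0
    set t : ℝ := min ((2*(i:ℝ)+1)/(2*(M:ℝ))) 1 with htdef
    have ht01 : t ∈ Icc (0:ℝ) 1 :=
      ⟨le_min (by positivity) (by norm_num), min_le_right _ _⟩
    have hxt : |x - t| ≤ 1/(2*(M:ℝ)) := by
      rcases min_cases ((2*(i:ℝ)+1)/(2*(M:ℝ))) 1 with ⟨he, hle⟩ | ⟨he, hlt⟩
      · rw [htdef, he, abs_le]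
        have e1 : (i:ℝ)/(M:ℝ) - (2*(i:ℝ)+1)/(2*(M:ℝ)) = -(1/(2*(M:ℝ))) := by
          field_simp; ring
        have e2 : ((i:ℝ)+1)/(M:ℝ) - (2*(i:ℝ)+1)/(2*(M:ℝ)) = 1/(2*(M:ℝ)) := by
          field_simp; ring
        constructor <;> linarith
      · rw [htdef, he, abs_le]
        have h2M : 2*(M:ℝ) < 2*(i:ℝ)+1 := by
          rw [lt_div_iff₀ (by linarith : (0:ℝ) < 2*(M:ℝ))] at hlt
          linarith
        have e1 : (i:ℝ)/(M:ℝ) - 1 + 1/(2*(M:ℝ)) = (2*(i:ℝ) + 1 - 2*(M:ℝ))/(2*(M:ℝ)) := by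
          field_simp; ring
        have e2 : (0:ℝ) ≤ (2*(i:ℝ) + 1 - 2*(M:ℝ))/(2*(M:ℝ)) := by
          apply div_nonneg (by linarith) (by linarith)
        constructor <;> linarith
    have hft : |f x - f t| ≤ c := by
      calc |f x - f t| ≤ |x - t| ^ α := hfh x ⟨hx0, hx1'⟩ t ht01
        _ ≤ (1/(2*(M:ℝ))) ^ α := Real.rpow_le_rpow (abs_nonneg _) hxt hα0
    rw [abs_le] at hft
    set g : ℝ := f t * Real.sqrt M with hgdef
    have hk_le : (k:ℝ) ≤ g + δ := by
      have h1 : (k:ℝ) ≤ f x * Real.sqrt M := by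
        rw [div_le_iff₀ hsq] at hy1; exact hy1
      have h2 : f x * Real.sqrt M ≤ (f t + c) * Real.sqrt M :=
        mul_le_mul_of_nonneg_right (by linarith [hft.2]) hsq.le
      have h3 : (f t + c) * Real.sqrt M = g + δ := by rw [hgdef, hδdef]; ring
      linarith
    have hk_ge : g - 1 - δ ≤ (k:ℝ) := by
      have h1 : f x * Real.sqrt M ≤ (k:ℝ) + 1 := by
        rw [le_div_iff₀ hsq] at hy2; linarith
      have h2 : (f t - c) * Real.sqrt M ≤ f x * Real.sqrt M :=
        mul_le_mul_of_nonneg_right (by linarith [hft.1]) hsq.le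
      have h3 : (f t - c) * Real.sqrt M = g - δ := by rw [hgdef, hδdef]; ring
      linarith
    have hai : a i = ⌈g - 1 - δ⌉ := by rw [hadef, hgdef, htdef]
    have ha_le_k : a i ≤ k := by rw [hai]; exact Int.ceil_le.mpr hk_ge
    have ha_ge : g - 1 - δ ≤ (a i : ℝ) := by rw [hai]; exact Int.le_ceil _
    have hka2 : k - a i ≤ 2 := by
      have h1 : ((k - a i : ℤ) : ℝ) < 3 := by push_cast; linarith
      have h2 : (k - a i : ℤ) < 3 := by exact_mod_cast h1
      omega
    have hiM' : i ≤ (M:ℤ) := by exact_mod_cast hiM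
    simp only [hφdef, hTdef, Finset.coe_product, Set.mem_prod, Finset.mem_coe,
      Finset.mem_Icc]
    exact ⟨⟨hi0, hiM'⟩, by omega, hka2⟩
  calc Set.ncard S = Set.ncard (φ '' S) := (Set.ncard_image_of_injective _ hinj).symm
    _ ≤ Set.ncard (↑T : Set (ℤ×ℤ)) := Set.ncard_le_ncard hsub T.finite_toSet
    _ = T.card := Set.ncard_coe_finset _
    _ = 3 * (M + 1) := by
        rw [hTdef, Finset.card_product, Int.card_Icc, Int.card_Icc]
        simp
        omega
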